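/- Let G be a connected graph on n vertices of corank c > 0 with spanning tree G̃, fundamental cycles O₁,...,O_c, and cycle incidence matrix Q. Set κ(G,G̃) = Tr((I_{n-1}+QᵀQ)⁻¹) and μ = (n-1)⁻¹ Σ_{k=1}^c (|O_k|-1). Then 1/(1+μ) ≤ κ(G,G̃)/(n-1) ≤ 1. -/

import Mathlib

open Matrix

/-- A row of a coboundary (incidence) matrix of an oriented graph: exactly one
`+1` (the positive end), one `-1` (the negative end), and zeros elsewhere. -/
def IsEdgeRow {n : ℕ} (r : Fin n → ℝ) : Prop :=
  ∃ a b : Fin n, a ≠ b ∧ r a = 1 ∧ r b = -1 ∧ ∀ j, j ≠ a → j ≠ b → r j = 0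


lemma trace_aux {m : ℕ} (A U : Matrix (Fin m) (Fin m) ℝ) (lam : Fin m → ℝ)
    (hsU : star U * U = 1) (hUs : U * star U = 1)
    (hspec : A = U * diagonal lam * star U) (hpos : ∀ i, lam i ≠ 0) :
    A⁻¹.trace = ∑ i, (lam i)⁻¹ ∧ A.trace = ∑ i, lam i := by
  have htr : ∀ d : Fin m → ℝ, (U * diagonal d * star U).trace = ∑ i, d i := by
    intro d
    rw [trace_mul_cycle, hsU, one_mul, trace_diagonal]
  have hmul : A * (U * diagonal (fun i => (lam i)⁻¹) * star U) = 1 := by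
    rw [hspec]
    calc (U * diagonal lam * star U) * (U * diagonal (fun i => (lam i)⁻¹) * star U)
        = U * (diagonal lam * (star U * U) * diagonal (fun i => (lam i)⁻¹)) * star U := by
          noncomm_ring
      _ = U * (diagonal lam * diagonal (fun i => (lam i)⁻¹)) * star U := by
          rw [hsU, mul_one]
      _ = 1 := by
          rw [diagonal_mul_diagonal]
          have h1 : (fun i => lam i * (lam i)⁻¹) = fun _ => (1:ℝ) := by
            funext i; exact mul_inv_cancel₀ (hpos i)
          rw [h1, diagonal_one, mul_one, hUs]
  have hinv : A⁻¹ = U * diagonal (fun i => (lam i)⁻¹) * star U := inv_eq_right_inv hmul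
  exact ⟨by rw [hinv, htr], by rw [hspec, htr]⟩

lemma spectral_traces {m : ℕ} {A : Matrix (Fin m) (Fin m) ℝ} (hA : A.PosDef) :
    A⁻¹.trace = ∑ i, (hA.1.eigenvalues i)⁻¹ ∧ A.trace = ∑ i, hA.1.eigenvalues i := by
  exact trace_aux A _ hA.1.eigenvalues
    ((Unitary.mem_iff).mp hA.1.eigenvectorUnitary.2).1
    ((Unitary.mem_iff).mp hA.1.eigenvectorUnitary.2).2
    hA.1.spectral_theorem (fun i => (hA.eigenvalues_pos i).ne')

lemma eigenvalues_ge_one {m : ℕ} {A : Matrix (Fin m) (Fin m) ℝ} (hA : A.PosDef)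
    (hP : (A - 1).PosSemidef) (i : Fin m) : 1 ≤ hA.1.eigenvalues i := by
  set v : Fin m → ℝ := ⇑(hA.1.eigenvectorBasis i) with hv
  have hmv : A *ᵥ v = hA.1.eigenvalues i • v := hA.1.mulVec_eigenvectorBasis i
  have hvne : v ≠ 0 := by
    intro h0
    have := hA.1.eigenvectorBasis.orthonormal.1 i
    rw [show (hA.1.eigenvectorBasis i : EuclideanSpace ℝ (Fin m)) = 0 from ?_] at this
    · simp at this
    · ext j; exact congrFun h0 j
  have hvv : 0 < v ⬝ᵥ v := by
    rcases Function.ne_iff.mp hvne with ⟨j, hj⟩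
    exact Finset.sum_pos' (fun k _ => mul_self_nonneg _)
      ⟨j, Finset.mem_univ j, mul_self_pos.mpr hj⟩
  have key := hP.dotProduct_mulVec_nonneg v
  rw [sub_mulVec, one_mulVec, hmv, dotProduct_sub, dotProduct_smul] at key
  have hstar : star v = v := by simp
  rw [hstar] at key
  have : 0 ≤ (hA.1.eigenvalues i - 1) * (v ⬝ᵥ v) := by
    rw [sub_mul, one_mul]; simpa [smul_eq_mul] using key
  nlinarith [hvv]

lemma IsEdgeRow.repr {n : ℕ} {r : Fin n → ℝ} (h : IsEdgeRow r) :
    ∃ a b : Fin n, a ≠ b ∧ r = Pi.single a 1 - Pi.single b 1 := by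
  obtain ⟨a, b, hab, ha, hb, h0⟩ := h
  refine ⟨a, b, hab, funext fun i => ?_⟩
  by_cases hia : i = a
  · subst hia; simp [Pi.single_apply, hab.symm, ha]
  by_cases hib : i = b
  · subst hib; simp [Pi.single_apply, hab.symm, hb]
  · simp [Pi.single_apply, hia, hib, h0 i hia hib]

lemma edge_dot {n : ℕ} (a b : Fin n) (x : Fin n → ℝ) :
    (Pi.single a 1 - Pi.single b 1) ⬝ᵥ x = x a - x b := by
  simp [sub_dotProduct, single_dotProduct]

lemma Q_bound {n c : ℕ}
    (Ht : Matrix (Fin (n - 1)) (Fin n) ℝ)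
    (B : Matrix (Fin c) (Fin n) ℝ)
    (Q : Matrix (Fin c) (Fin (n - 1)) ℝ)
    (hHtRows : ∀ i, IsEdgeRow (Ht i))
    (hBRows : ∀ k, IsEdgeRow (B k))
    (hrank : Ht.rank = n - 1)
    (hQ : B = (-Q) * Ht) :
    ∀ k j0, |Q k j0| ≤ 1 := by
  classical
  have hli : LinearIndependent ℝ Ht := by
    rw [show LinearIndependent ℝ Ht ↔ LinearIndependent ℝ Ht.row from Iff.rfl,
      linearIndependent_iff_card_eq_finrank_span]
    unfold Set.finrank
    rw [← Ht.rank_eq_finrank_span_row, hrank, Fintype.card_fin]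
  intro k j0
  obtain ⟨a0, b0, hab0, hr0⟩ := (hHtRows j0).repr
  set step : Fin n → Fin n → Prop :=
    fun u v => ∃ j, j ≠ j0 ∧ Ht j u ≠ 0 ∧ Ht j v ≠ 0 with hstepdef
  have hsymm : Symmetric step := fun u v ⟨j, h1, h2, h3⟩ => ⟨j, h1, h3, h2⟩
  set reach := Relation.ReflTransGen step with hreachdef
  have hreach_symm : Symmetric reach := by
    haveI : Std.Symm step := ⟨hsymm⟩; exact fun a b h => Std.Symm.symm a b h
  set x : Fin n → ℝ := fun v => if reach a0 v then 1 else 0 with hxdef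
  have hx01 : ∀ v, x v = 0 ∨ x v = 1 := fun v => by
    by_cases h : reach a0 v <;> simp [hxdef, h]
  -- nonzero entries of an edge row are at its endpoints
  have hsupp : ∀ j (w : Fin n), Ht j w ≠ 0 →
      ∀ a b (hab : a ≠ b), Ht j = Pi.single a 1 - Pi.single b 1 → w = a ∨ w = b := by
    intro j w hw a b hab hrepr
    by_contra hcon
    push_neg at hcon
    apply hw
    rw [hrepr]
    simp [Pi.single_apply, hcon.1, hcon.2]
  -- reach implies membership in span of other rows
  have hspan : ∀ u v, reach u v →
      (Pi.single u 1 - Pi.single v 1 : Fin n → ℝ) ∈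
        Submodule.span ℝ (Ht '' {j0}ᶜ) := by
    intro u v h
    induction h with
    | refl => simp
    | @tail w v' hred hstep ih =>
        obtain ⟨j, hj, hw, hv'⟩ := hstep
        obtain ⟨a, b, hab, hrepr⟩ := (hHtRows j).repr
        have hmem : Ht j ∈ Submodule.span ℝ (Ht '' {j0}ᶜ) :=
          Submodule.subset_span ⟨j, hj, rfl⟩
        have hwab := hsupp j w hw a b hab hrepr
        have hvab := hsupp j v' hv' a b hab hrepr
        have key : (Pi.single w 1 - Pi.single v' 1 : Fin n → ℝ) ∈
            Submodule.span ℝ (Ht '' {j0}ᶜ) := by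
          rcases hwab with hw1 | hw1 <;> rcases hvab with hv1 | hv1 <;> rw [hw1, hv1]
          · simp
          · rw [← hrepr]; exact hmem
          · have heq : (Pi.single b 1 - Pi.single a 1 : Fin n → ℝ) = -(Ht j) := by
              rw [hrepr, neg_sub]
            rw [heq]; exact Submodule.neg_mem _ hmem
          · simp
        rw [← sub_add_sub_cancel (Pi.single u 1 : Fin n → ℝ) (Pi.single w 1) (Pi.single v' 1)]
        exact Submodule.add_mem _ ih key
  -- b0 not reachable from a0
  have hnotreach : ¬ reach a0 b0 := by
    intro h
    have := hspan a0 b0 h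
    rw [← hr0] at this
    exact hli.notMem_span_image (by simp) this
  -- Ht *ᵥ x = Pi.single j0 1
  have hHtx : Ht *ᵥ x = Pi.single j0 1 := by
    funext j
    show Ht j ⬝ᵥ x = _
    by_cases hj : j = j0
    · subst hj
      rw [hr0, edge_dot]
      have hxa : x a0 = 1 := if_pos Relation.ReflTransGen.refl
      have hxb : x b0 = 0 := by simp [hxdef, hnotreach]
      rw [hxa, hxb, Pi.single_apply]
      simp
    · obtain ⟨a, b, hab, hrepr⟩ := (hHtRows j).repr
      have hstepab : step a b := ⟨j, hj, by rw [hrepr]; simp [Pi.single_apply, hab],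
        by rw [hrepr]; simp [Pi.single_apply, hab.symm]⟩
      have hxeq : x a = x b := by
        by_cases h : reach a0 a
        · have : reach a0 b := h.trans (Relation.ReflTransGen.single hstepab)
          simp [hxdef, h, this]
        · have h2 : ¬ reach a0 b := fun hb =>
            h (hb.trans (Relation.ReflTransGen.single (hsymm hstepab)))
          simp [hxdef, h, h2]
      rw [hrepr, edge_dot, hxeq, Pi.single_apply, sub_self]
      simp [hj]
  -- conclude
  have hBx : B *ᵥ x = fun k' => -Q k' j0 := by
    rw [hQ, ← mulVec_mulVec, hHtx, mulVec_single]
    funext k'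
    simp
  obtain ⟨a, b, hab, hrepr⟩ := (hBRows k).repr
  have h1 : -Q k j0 = x a - x b := by
    have := congrFun hBx k
    rw [show (B *ᵥ x) k = B k ⬝ᵥ x from rfl, hrepr, edge_dot] at this
    linarith [this]
  have h2 : |x a - x b| ≤ 1 := by
    rcases hx01 a with ha | ha <;> rcases hx01 b with hb | hb <;>
      rw [ha, hb] <;> norm_num
  calc |Q k j0| = |(-Q k j0)| := (abs_neg _).symm
    _ = |x a - x b| := by rw [h1]
    _ ≤ 1 := h2

/-- For a connected graph `G` on `n` vertices of corank `c > 0` with spanning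
tree `G̃`, fundamental cycles `O₁,…,O_c` and cycle incidence matrix `Q`, setting
`κ(G,G̃) = Tr((I_{n-1}+QᵀQ)⁻¹)` and `μ = (n-1)⁻¹ Σ_k (|O_k|-1)`, one has
`1/(1+μ) ≤ κ(G,G̃)/(n-1) ≤ 1`. -/
theorem kappa_bounds {n c : ℕ} (hn : 2 ≤ n) (hc : 0 < c)
    (Ht : Matrix (Fin (n - 1)) (Fin n) ℝ)
    (B : Matrix (Fin c) (Fin n) ℝ)
    (Q : Matrix (Fin c) (Fin (n - 1)) ℝ)
    (hHtRows : ∀ i, IsEdgeRow (Ht i))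
    (hBRows : ∀ k, IsEdgeRow (B k))
    (hrank : Ht.rank = n - 1)
    (hQ : B = (-Q) * Ht) :
    letI cycLen : Fin c → ℕ :=
      fun k => (Finset.univ.filter fun j => Q k j ≠ 0).card + 1
    letI μ : ℝ := ((n : ℝ) - 1)⁻¹ * ∑ k, ((cycLen k : ℝ) - 1)
    letI κ : ℝ := (((1 : Matrix (Fin (n-1)) (Fin (n-1)) ℝ) + Qᵀ * Q)⁻¹).trace
    1 / (1 + μ) ≤ κ / ((n : ℝ) - 1) ∧ κ / ((n : ℝ) - 1) ≤ 1 := by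
  classical
  beta_reduce
  set cycLen : Fin c → ℕ :=
    (fun k => (Finset.univ.filter fun j => Q k j ≠ 0).card + 1) with hcycdef
  set μ : ℝ := ((n : ℝ) - 1)⁻¹ * ∑ k, ((cycLen k : ℝ) - 1) with hmudef
  have hn1 : 1 ≤ n - 1 := by omega
  have hcast : ((n : ℝ) - 1) = ((n - 1 : ℕ) : ℝ) := by
    have h1 : (1:ℕ) ≤ n := by omega
    rw [Nat.cast_sub h1, Nat.cast_one]
  set M : ℝ := ((n - 1 : ℕ) : ℝ) with hMdef
  have hMpos : (0:ℝ) < M := by rw [hMdef]; exact_mod_cast Nat.pos_of_ne_zero (by omega)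
  set P : Matrix (Fin (n-1)) (Fin (n-1)) ℝ := Qᵀ * Q with hPdef
  have hPsd : P.PosSemidef := by
    have h := posSemidef_conjTranspose_mul_self Q
    have hct : Qᴴ = Qᵀ := by ext i j; simp [conjTranspose_apply]
    rwa [hct] at h
  set A : Matrix (Fin (n-1)) (Fin (n-1)) ℝ := 1 + P with hAdef
  have hA : A.PosDef := Matrix.PosDef.one.add_posSemidef hPsd
  have hsub : (A - 1).PosSemidef := by
    have : A - 1 = P := by rw [hAdef, add_sub_cancel_left]
    rwa [this]
  set κ : ℝ := A⁻¹.trace with hκdef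
  obtain ⟨hκeq, htreq⟩ := spectral_traces hA
  set lam := hA.1.eigenvalues with hlamdef
  have hlam1 : ∀ i, 1 ≤ lam i := eigenvalues_ge_one hA hsub
  haveI : Nonempty (Fin (n-1)) := Fin.pos_iff_nonempty.mp (by omega)
  -- trace of A
  have htrP : P.trace = ∑ k, ∑ j, Q k j ^ 2 := by
    rw [hPdef, trace_mul_comm]
    simp [Matrix.trace, Matrix.diag, Matrix.mul_apply, transpose_apply, sq]
  have htrA : A.trace = M + ∑ k, ∑ j, Q k j ^ 2 := by
    rw [hAdef, trace_add, trace_one, htrP, hMdef]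
    simp [Fintype.card_fin]
  -- entry bound
  have hQb : ∀ k j, |Q k j| ≤ 1 := Q_bound Ht B Q hHtRows hBRows hrank hQ
  have hbound : ∀ k, ∑ j, Q k j ^ 2 ≤ ((cycLen k : ℝ) - 1) := by
    intro k
    have h1 : ∑ j ∈ Finset.univ.filter (fun j => Q k j ≠ 0), Q k j ^ 2
        = ∑ j, Q k j ^ 2 := by
      apply Finset.sum_filter_of_ne
      intro x _ hx
      exact fun h0 => hx (by rw [h0]; ring)
    have h2 : ∑ j ∈ Finset.univ.filter (fun j => Q k j ≠ 0), Q k j ^ 2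
        ≤ ((Finset.univ.filter (fun j => Q k j ≠ 0)).card : ℝ) := by
      calc ∑ j ∈ Finset.univ.filter (fun j => Q k j ≠ 0), Q k j ^ 2
          ≤ ∑ _j ∈ Finset.univ.filter (fun j => Q k j ≠ 0), (1:ℝ) :=
            Finset.sum_le_sum fun j _ => by nlinarith [hQb k j, sq_abs (Q k j), abs_nonneg (Q k j)]
        _ = _ := by simp
    have h3 : ((cycLen k : ℝ) - 1) = ((Finset.univ.filter (fun j => Q k j ≠ 0)).card : ℝ) := by
      show (((Finset.univ.filter (fun j => Q k j ≠ 0)).card + 1 : ℕ) : ℝ) - 1 = _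
      push_cast; ring
    rw [← h1, h3]; exact h2
  have hμ0 : 0 ≤ μ := by
    rw [hmudef]
    apply mul_nonneg
    · rw [hcast]; positivity
    · apply Finset.sum_nonneg
      intro k _
      have h1 : (1:ℝ) ≤ (cycLen k : ℝ) := by
        exact_mod_cast Nat.one_le_iff_ne_zero.mpr (by simp [hcycdef])
      linarith
  have hMμ : M * μ = ∑ k, ((cycLen k : ℝ) - 1) := by
    show M * (((n : ℝ) - 1)⁻¹ * _) = _
    rw [hcast, ← mul_assoc, mul_inv_cancel₀ hMpos.ne', one_mul]
  have htrA_le : A.trace ≤ M * (1 + μ) := by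
    rw [htrA, mul_add, mul_one, hMμ]
    have := Finset.sum_le_sum (fun k (_ : k ∈ Finset.univ) => hbound k)
    linarith
  -- upper bound
  have hκ_le : κ ≤ M := by
    rw [hκdef, hκeq]
    calc ∑ i, (lam i)⁻¹ ≤ ∑ _i : Fin (n-1), (1:ℝ) :=
          Finset.sum_le_sum fun i _ => inv_le_one_of_one_le₀ (hlam1 i)
      _ = M := by simp [hMdef]
  have hκpos : 0 < κ := by
    rw [hκdef, hκeq]
    exact Finset.sum_pos (fun i _ => inv_pos.mpr (lt_of_lt_of_le one_pos (hlam1 i)))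
      Finset.univ_nonempty
  -- Cauchy-Schwarz
  have hCS : M ^ 2 ≤ A.trace * κ := by
    have h := Finset.sum_mul_sq_le_sq_mul_sq Finset.univ
      (fun i => Real.sqrt (lam i)) (fun i => (Real.sqrt (lam i))⁻¹)
    have hpos : ∀ i, (0:ℝ) < lam i := fun i => lt_of_lt_of_le one_pos (hlam1 i)
    have h1 : ∀ i, Real.sqrt (lam i) * (Real.sqrt (lam i))⁻¹ = 1 := fun i =>
      mul_inv_cancel₀ (Real.sqrt_ne_zero'.mpr (hpos i))
    have h2 : ∀ i, Real.sqrt (lam i) ^ 2 = lam i := fun i => Real.sq_sqrt (hpos i).le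
    have h3 : ∀ i, ((Real.sqrt (lam i))⁻¹) ^ 2 = (lam i)⁻¹ := fun i => by
      rw [inv_pow, h2]
    simp only [h1, h2, h3] at h
    rw [hκdef, hκeq, htreq]
    calc M ^ 2 = (∑ _i : Fin (n-1), (1:ℝ)) ^ 2 := by simp [hMdef]
      _ ≤ _ := h
  constructor
  · rw [hcast, div_le_div_iff₀ (by linarith) hMpos]
    nlinarith [hCS, htrA_le, hκpos, hMpos]
  · rw [hcast, div_le_one hMpos]
    exact hκ_le
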